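/- Let μ be a finite (signed) Borel measure on an open set Ω ⊆ ℝ^N, decomposed as μ = μ₀ + λ⁺ - λ⁻ where λ⁺, λ⁻ are nonnegative finite measures concentrated on disjoint Borel sets E⁺, E⁻ respectively, and μ₀ vanishes on all sets of zero p-capacity while λ⁺, λ⁻ are concentrated on sets of zero p-capacity. Then this decomposition is unique: if μ = ν₀ + σ⁺ - σ⁻ is another such decomposition, then μ₀ = ν₀, λ⁺ = σ⁺ and λ⁻ = σ⁻. -/

import Mathlib

open MeasureTheory
open scoped ENNReal

/-- Uniqueness of the decomposition `μ = μ₀ + λ⁺ - λ⁻`, where `μ₀` is absolutely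
continuous with respect to the capacity `c` and `λ⁺, λ⁻` are nonnegative measures
concentrated on disjoint sets of zero capacity. -/
theorem decomposition_unique {Ω : Type*} [MeasurableSpace Ω]
    (c : Set Ω → ℝ≥0∞) (hc0 : c ∅ = 0) (hcmono : Monotone c)
    (μ₀ ν₀ : SignedMeasure Ω)
    (lp lm sp sm : Measure Ω)
    [IsFiniteMeasure lp] [IsFiniteMeasure lm] [IsFiniteMeasure sp] [IsFiniteMeasure sm]
    (hμ₀ : ∀ s : Set Ω, MeasurableSet s → c s = 0 → μ₀ s = 0)
    (hν₀ : ∀ s : Set Ω, MeasurableSet s → c s = 0 → ν₀ s = 0)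
    (hl : ∃ Ep Em : Set Ω, MeasurableSet Ep ∧ MeasurableSet Em ∧ Disjoint Ep Em ∧
      c Ep = 0 ∧ c Em = 0 ∧ lp Epᶜ = 0 ∧ lm Emᶜ = 0)
    (hs : ∃ Ep Em : Set Ω, MeasurableSet Ep ∧ MeasurableSet Em ∧ Disjoint Ep Em ∧
      c Ep = 0 ∧ c Em = 0 ∧ sp Epᶜ = 0 ∧ sm Emᶜ = 0)
    (heq : μ₀ + lp.toSignedMeasure - lm.toSignedMeasure =
      ν₀ + sp.toSignedMeasure - sm.toSignedMeasure) :
    μ₀ = ν₀ ∧ lp = sp ∧ lm = sm := by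
  obtain ⟨Ep, Em, hEp, hEm, hEd, hcEp, hcEm, hlp, hlm⟩ := hl
  obtain ⟨Fp, Fm, hFp, hFm, hFd, hcFp, hcFm, hsp, hsm⟩ := hs
  have hsub : ∀ (A K : Set Ω), A ⊆ K → c K = 0 → c A = 0 := fun A K h hK =>
    le_antisymm (hK ▸ hcmono h) (zero_le)
  set Z : Set Ω := Ep ∪ Em ∪ Fp ∪ Fm with hZdef
  have hZm : MeasurableSet Z := ((hEp.union hEm).union hFp).union hFm
  -- a signed measure vanishing on capacity-null sets vanishes on s ∩ Z
  have key : ∀ (ρ : SignedMeasure Ω), (∀ s : Set Ω, MeasurableSet s → c s = 0 → ρ s = 0) →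
      ∀ s : Set Ω, MeasurableSet s → ρ (s ∩ Z) = 0 := by
    intro ρ hρ s hsm'
    have h1 : s ∩ Z = (s ∩ Ep) ∪ (((s ∩ Em) \ Ep) ∪ (((s ∩ Fp) \ (Ep ∪ Em)) ∪
        ((s ∩ Fm) \ (Ep ∪ Em ∪ Fp)))) := by
      ext x
      simp only [hZdef, Set.mem_inter_iff, Set.mem_union, Set.mem_diff]
      tauto
    have m1 : MeasurableSet (s ∩ Ep) := hsm'.inter hEp
    have m2 : MeasurableSet ((s ∩ Em) \ Ep) := (hsm'.inter hEm).diff hEp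
    have m3 : MeasurableSet ((s ∩ Fp) \ (Ep ∪ Em)) := (hsm'.inter hFp).diff (hEp.union hEm)
    have m4 : MeasurableSet ((s ∩ Fm) \ (Ep ∪ Em ∪ Fp)) :=
      (hsm'.inter hFm).diff ((hEp.union hEm).union hFp)
    have d34 : Disjoint ((s ∩ Fp) \ (Ep ∪ Em)) ((s ∩ Fm) \ (Ep ∪ Em ∪ Fp)) := by
      rw [Set.disjoint_left]
      rintro x ⟨⟨-, hx⟩, -⟩ ⟨-, hx'⟩
      exact hx' (Or.inr hx)
    have d234 : Disjoint ((s ∩ Em) \ Ep)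
        (((s ∩ Fp) \ (Ep ∪ Em)) ∪ ((s ∩ Fm) \ (Ep ∪ Em ∪ Fp))) := by
      rw [Set.disjoint_left]
      rintro x ⟨⟨-, hx⟩, -⟩ (⟨-, hx'⟩ | ⟨-, hx'⟩)
      · exact hx' (Or.inr hx)
      · exact hx' (Or.inl (Or.inr hx))
    have d1234 : Disjoint (s ∩ Ep) (((s ∩ Em) \ Ep) ∪ (((s ∩ Fp) \ (Ep ∪ Em)) ∪
        ((s ∩ Fm) \ (Ep ∪ Em ∪ Fp)))) := by
      rw [Set.disjoint_left]
      rintro x ⟨-, hx⟩ (⟨-, hx'⟩ | (⟨-, hx'⟩ | ⟨-, hx'⟩))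
      · exact hx' hx
      · exact hx' (Or.inl hx)
      · exact hx' (Or.inl (Or.inl hx))
    rw [h1, VectorMeasure.of_union d1234 m1 (m2.union (m3.union m4)),
      VectorMeasure.of_union d234 m2 (m3.union m4), VectorMeasure.of_union d34 m3 m4,
      hρ _ m1 (hsub _ _ Set.inter_subset_right hcEp),
      hρ _ m2 (hsub _ _ (Set.diff_subset.trans Set.inter_subset_right) hcEm),
      hρ _ m3 (hsub _ _ (Set.diff_subset.trans Set.inter_subset_right) hcFp),
      hρ _ m4 (hsub _ _ (Set.diff_subset.trans Set.inter_subset_right) hcFm)]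
    ring
  -- μ₀ = ν₀
  have h01 : μ₀ = ν₀ := by
    ext s hsm'
    have hsplit : ∀ ρ : SignedMeasure Ω, (∀ t : Set Ω, MeasurableSet t → c t = 0 → ρ t = 0) →
        ρ s = ρ (s \ Z) := by
      intro ρ hρ
      have hdu : Disjoint (s ∩ Z) (s \ Z) :=
        (@disjoint_sdiff_self_right _ Z s _).mono_left Set.inter_subset_right
      rw [show ρ s = ρ ((s ∩ Z) ∪ (s \ Z)) from by rw [Set.inter_union_diff],
        VectorMeasure.of_union hdu (hsm'.inter hZm) (hsm'.diff hZm), key ρ hρ s hsm', zero_add]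
    have hts : MeasurableSet (s \ Z) := hsm'.diff hZm
    have hlpt : lp (s \ Z) = 0 :=
      measure_mono_null (fun x hx => fun hc => hx.2 (Or.inl (Or.inl (Or.inl hc)))) hlp
    have hlmt : lm (s \ Z) = 0 :=
      measure_mono_null (fun x hx => fun hc => hx.2 (Or.inl (Or.inl (Or.inr hc)))) hlm
    have hspt : sp (s \ Z) = 0 :=
      measure_mono_null (fun x hx => fun hc => hx.2 (Or.inl (Or.inr hc))) hsp
    have hsmt : sm (s \ Z) = 0 :=
      measure_mono_null (fun x hx => fun hc => hx.2 (Or.inr hc)) hsm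
    have happ := congrArg (fun v : SignedMeasure Ω => v (s \ Z)) heq
    simp only [VectorMeasure.sub_apply, VectorMeasure.add_apply,
      Measure.toSignedMeasure_apply_measurable hts, hlpt, hlmt, hspt, hsmt,
      measureReal_def, ENNReal.toReal_zero, sub_zero, add_zero] at happ
    rw [hsplit μ₀ hμ₀, hsplit ν₀ hν₀, happ]
  -- now the measure parts
  have h2 : lp.toSignedMeasure - lm.toSignedMeasure = sp.toSignedMeasure - sm.toSignedMeasure := by
    rw [h01, add_sub_assoc, add_sub_assoc, add_right_inj] at heq
    exact heq
  have sing1 : lp ⟂ₘ lm :=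
    ⟨Epᶜ, hEp.compl, hlp, by
      rw [compl_compl]
      exact measure_mono_null (fun x hx hx' => Set.disjoint_left.1 hEd hx hx') hlm⟩
  have sing2 : sp ⟂ₘ sm :=
    ⟨Fpᶜ, hFp.compl, hsp, by
      rw [compl_compl]
      exact measure_mono_null (fun x hx hx' => Set.disjoint_left.1 hFd hx hx') hsm⟩
  have hj : (⟨lp, lm, sing1⟩ : JordanDecomposition Ω) = (⟨sp, sm, sing2⟩ : JordanDecomposition Ω) :=
    JordanDecomposition.toSignedMeasure_injective h2
  refine ⟨h01, ?_, ?_⟩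
  · exact congrArg JordanDecomposition.posPart hj
  · exact congrArg JordanDecomposition.negPart hj
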